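/- (Main Theorem) Assume: κ = cf(λ) < λ, E is a uniform ultrafilter on κ, λ is a strong limit cardinal, ⟨λ_i : i < κ⟩ is a strictly increasing sequence of regular cardinals with supremum λ, each U_i is a uniform ultrafilter on λ_i generated by a ⊆*-decreasing sequence ⟨A_{i,α} : α < θ_i⟩, and χ_λ̄ = tcf(∏_{i<κ} λ_i, <_E), χ_θ̄ = tcf(∏_{i<κ} θ_i, <_E) both exist. Then 𝔲_λ ≤ χ_λ̄ · χ_θ̄, i.e., there is a uniform ultrafilter on λ with a base of cardinality at most χ_λ̄ · χ_θ̄. -/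

import Mathlib

open Cardinal Set

/-- `U` is an ultrafilter on the set of ordinals `S`. -/
def IsUltrafilterOn (S : Set Ordinal.{0}) (U : Set (Set Ordinal.{0})) : Prop :=
  (∀ A ∈ U, A ⊆ S) ∧ S ∈ U ∧ ∅ ∉ U ∧
    (∀ A ∈ U, ∀ B ∈ U, A ∩ B ∈ U) ∧
    (∀ A ∈ U, ∀ B, A ⊆ B → B ⊆ S → B ∈ U) ∧
    (∀ A, A ⊆ S → A ∈ U ∨ S \ A ∈ U)

/-- `s` has cardinality `< μ`. -/
def cardLT (s : Set Ordinal.{0}) (μ : Cardinal.{0}) : Prop := #s < Cardinal.lift.{1,0} μ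

/-- `s` has cardinality `μ`. -/
def cardEQ (s : Set Ordinal.{0}) (μ : Cardinal.{0}) : Prop := #s = Cardinal.lift.{1,0} μ

/-- Main Theorem: under the hypotheses (α)–(η) below,
`𝔲_λ ≤ χ_λ̄ · χ_θ̄`: some uniform ultrafilter on `λ` has a base of cardinality
at most `χ_λ̄ · χ_θ̄`. -/
lemma mk_Iio_lt {b : Ordinal.{0}} {c : Cardinal.{0}} (h : b < c.ord) :
    #(Set.Iio b) < Cardinal.lift.{1,0} c := by
  rw [Ordinal.mk_Iio_ordinal]
  exact Cardinal.lift_lt.2 (Cardinal.lt_ord.1 h)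

lemma bounded_of_card_lt {c : Cardinal.{0}} (hc : c.IsRegular) {s : Set Ordinal.{0}}
    (hs : s ⊆ Set.Iio c.ord) (hcard : #s < Cardinal.lift.{1,0} c) :
    ∃ η < c.ord, s ⊆ Set.Iio η := by
  classical
  have ha : #s < (Ordinal.lift.{1} c.ord).cof := by
    rw [← Ordinal.lift_cof, hc.cof_ord]; exact hcard
  refine ⟨_, Ordinal.sSup_add_one_lt_of_lt_cof ha (fun i hi => hs hi), ?_⟩
  intro x hx
  have hbdd : BddAbove ((· + 1) '' s) :=
    ⟨c.ord, by rintro _ ⟨y, hy, rfl⟩; exact Order.add_one_le_of_lt (hs hy)⟩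
  exact (Order.lt_add_one_iff.2 le_rfl).trans_le (le_csSup hbdd ⟨x, hx, rfl⟩)

lemma uf_diff_small {c : Cardinal.{0}} {Ui : Set (Set Ordinal.{0})}
    (hU : IsUltrafilterOn (Set.Iio c.ord) Ui)
    (huni : ∀ X ∈ Ui, cardEQ X c)
    {X : Set Ordinal.{0}} (hX : X ∈ Ui) {C : Set Ordinal.{0}}
    (hC : #C < Cardinal.lift.{1,0} c) : X \ C ∈ Ui := by
  have hXsub : X ⊆ Set.Iio c.ord := hU.1 X hX
  rcases hU.2.2.2.2.2 (X \ C) (fun x hx => hXsub hx.1) with h | h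
  · exact h
  · exfalso
    have hmem : X ∩ (Set.Iio c.ord \ (X \ C)) ∈ Ui := hU.2.2.2.1 X hX _ h
    have hsub : X ∩ (Set.Iio c.ord \ (X \ C)) ⊆ C := by
      rintro x ⟨hx1, _, hx3⟩
      by_contra hxc
      exact hx3 ⟨hx1, hxc⟩
    have := huni _ hmem
    have hle : #(X ∩ (Set.Iio c.ord \ (X \ C)) : Set Ordinal) ≤ #C :=
      Cardinal.mk_le_mk_of_subset hsub
    rw [this] at hle
    exact absurd (hle.trans_lt hC) (lt_irrefl _)

theorem stmt5 (lam κ χlam χθ : Cardinal.{0})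
    (lam_ θ : Ordinal.{0} → Cardinal.{0})
    (E : Set (Set Ordinal.{0})) (U : Ordinal.{0} → Set (Set Ordinal.{0}))
    (A : Ordinal.{0} → Ordinal.{0} → Set Ordinal.{0})
    (f g : Ordinal.{0} → Ordinal.{0} → Ordinal.{0})
    -- (α) κ = cf(λ) < λ
    (hcof : lam.ord.cof = κ) (hκlt : κ < lam)
    -- (β) E is a uniform ultrafilter on κ
    (hE : IsUltrafilterOn (Set.Iio κ.ord) E)
    (hEuni : ∀ Y ∈ E, cardEQ Y κ)
    -- (γ) λ is a strong limit cardinal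
    (hsl : lam.IsStrongLimit)
    -- (δ) ⟨λ_i : i < κ⟩ strictly increasing regular cardinals tending to λ
    (hreg : ∀ i < κ.ord, (lam_ i).IsRegular)
    (hmono : ∀ i j, i < j → j < κ.ord → lam_ i < lam_ j)
    (hlt : ∀ i < κ.ord, lam_ i < lam)
    (hcofinal : ∀ c < lam, ∃ i < κ.ord, c ≤ lam_ i)
    -- (ε) U_i is a uniform ultrafilter on λ_i
    (hU : ∀ i < κ.ord, IsUltrafilterOn (Set.Iio (lam_ i).ord) (U i))
    (hUuni : ∀ i < κ.ord, ∀ X ∈ U i, cardEQ X (lam_ i))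
    -- (ζ) U_i is generated by the ⊆*-decreasing sequence ⟨A i α : α < θ i⟩
    (hAmem : ∀ i < κ.ord, ∀ α < (θ i).ord, A i α ∈ U i)
    (hAdec : ∀ i < κ.ord, ∀ α α', α < α' → α' < (θ i).ord →
      cardLT (A i α' \ A i α) (lam_ i))
    (hAgen : ∀ i < κ.ord, ∀ B ∈ U i, ∃ α < (θ i).ord, cardLT (A i α \ B) (lam_ i))
    -- (η) χ_λ̄ = tcf(∏ λ_i, <_E) and χ_θ̄ = tcf(∏ θ_i, <_E), witnessed by scales
    (hχlam : χlam.IsRegular) (hχθ : χθ.IsRegular)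
    (hf : ∀ α < χlam.ord, ∀ i < κ.ord, f α i < (lam_ i).ord)
    (hfinc : ∀ α α', α < α' → α' < χlam.ord → {i | i < κ.ord ∧ f α i < f α' i} ∈ E)
    (hfcof : ∀ h : Ordinal.{0} → Ordinal.{0}, (∀ i < κ.ord, h i < (lam_ i).ord) →
      ∃ α < χlam.ord, {i | i < κ.ord ∧ h i < f α i} ∈ E)
    (hg : ∀ β < χθ.ord, ∀ i < κ.ord, g β i < (θ i).ord)
    (hginc : ∀ β β', β < β' → β' < χθ.ord → {i | i < κ.ord ∧ g β i < g β' i} ∈ E)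
    (hgcof : ∀ h : Ordinal.{0} → Ordinal.{0}, (∀ i < κ.ord, h i < (θ i).ord) →
      ∃ β < χθ.ord, {i | i < κ.ord ∧ h i < g β i} ∈ E) :
    ∃ V : Set (Set Ordinal.{0}), ∃ ℬ : Set (Set Ordinal.{0}),
      IsUltrafilterOn (Set.Iio lam.ord) V ∧
      (∀ X ∈ V, cardEQ X lam) ∧
      ℬ ⊆ V ∧
      #ℬ ≤ Cardinal.lift.{1,0} (χlam * χθ) ∧
      (∀ B ∈ V, ∃ A' ∈ ℬ, cardLT (A' \ B) lam) := by
  classical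
  -- basic facts
  have κinf : ℵ₀ ≤ κ := by
    rw [← hcof]
    exact Ordinal.aleph0_le_cof.2 (Cardinal.isSuccLimit_ord hsl.aleph0_le)
  have κordlim : Order.IsSuccLimit κ.ord := Cardinal.isSuccLimit_ord κinf
  have hIioord : ∀ i < κ.ord, Set.Iio (lam_ i).ord ⊆ Set.Iio lam.ord := by
    intro i hi x hx
    exact lt_of_lt_of_le hx (Cardinal.ord_le_ord.2 (hlt i hi).le)
  set Si : Set Ordinal.{0} → Set Ordinal.{0} :=
    fun B => {i | i < κ.ord ∧ B ∩ Set.Iio (lam_ i).ord ∈ U i} with hSidef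
  have hSisub : ∀ B, Si B ⊆ Set.Iio κ.ord := fun B i hi => hi.1
  set V : Set (Set Ordinal.{0}) := {B | B ⊆ Set.Iio lam.ord ∧ Si B ∈ E} with hVdef
  -- V is an ultrafilter
  have hVuf : IsUltrafilterOn (Set.Iio lam.ord) V := by
    refine ⟨fun X hX => hX.1, ?_, ?_, ?_, ?_, ?_⟩
    · -- Iio lam.ord ∈ V
      refine ⟨subset_rfl, ?_⟩
      have heq : Si (Set.Iio lam.ord) = Set.Iio κ.ord := by
        ext i
        simp only [hSidef, Set.mem_setOf_eq, Set.mem_Iio]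
        constructor
        · exact fun h => h.1
        · intro hi
          refine ⟨hi, ?_⟩
          rw [Set.inter_eq_self_of_subset_right (hIioord i hi)]
          exact (hU i hi).2.1
      rw [heq]
      exact hE.2.1
    · -- ∅ ∉ V
      rintro ⟨-, hmem⟩
      have heq : Si (∅ : Set Ordinal) = ∅ := by
        ext i
        simp only [hSidef, Set.mem_setOf_eq, Set.empty_inter, Set.mem_empty_iff_false, iff_false,
          not_and]
        intro hi hm
        exact (hU i hi).2.2.1 hm
      rw [heq] at hmem
      exact hE.2.2.1 hmem
    · -- intersection
      rintro X ⟨hX1, hX2⟩ Y ⟨hY1, hY2⟩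
      refine ⟨fun x hx => hX1 hx.1, ?_⟩
      have hsub : Si X ∩ Si Y ⊆ Si (X ∩ Y) := by
        rintro i ⟨⟨hi, hXi⟩, ⟨-, hYi⟩⟩
        refine ⟨hi, ?_⟩
        have heq : (X ∩ Y) ∩ Set.Iio (lam_ i).ord
            = (X ∩ Set.Iio (lam_ i).ord) ∩ (Y ∩ Set.Iio (lam_ i).ord) := by
          ext x; constructor
          · rintro ⟨⟨h1, h2⟩, h3⟩; exact ⟨⟨h1, h3⟩, ⟨h2, h3⟩⟩
          · rintro ⟨⟨h1, h3⟩, ⟨h2, -⟩⟩; exact ⟨⟨h1, h2⟩, h3⟩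
        rw [heq]
        exact (hU i hi).2.2.2.1 _ hXi _ hYi
      exact hE.2.2.2.2.1 _ (hE.2.2.2.1 _ hX2 _ hY2) _ hsub (hSisub _)
    · -- upward
      rintro X ⟨hX1, hX2⟩ B hXB hBsub
      refine ⟨hBsub, ?_⟩
      have hsub : Si X ⊆ Si B := by
        rintro i ⟨hi, hXi⟩
        refine ⟨hi, ?_⟩
        exact (hU i hi).2.2.2.2.1 _ hXi _ (fun x hx => ⟨hXB hx.1, hx.2⟩) Set.inter_subset_right
      exact hE.2.2.2.2.1 _ hX2 _ hsub (hSisub _)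
    · -- ultra
      intro X hXsub
      rcases hE.2.2.2.2.2 (Si X) (hSisub X) with h | h
      · left; exact ⟨hXsub, h⟩
      · right
        refine ⟨Set.diff_subset, ?_⟩
        have hsub : Set.Iio κ.ord \ Si X ⊆ Si (Set.Iio lam.ord \ X) := by
          rintro i ⟨hi, hnot⟩
          refine ⟨hi, ?_⟩
          rcases (hU i hi).2.2.2.2.2 (X ∩ Set.Iio (lam_ i).ord) Set.inter_subset_right
              with hmem | hmem
          · exact absurd ⟨hi, hmem⟩ hnot
          · have heq : Set.Iio (lam_ i).ord \ (X ∩ Set.Iio (lam_ i).ord)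
                = (Set.Iio lam.ord \ X) ∩ Set.Iio (lam_ i).ord := by
              ext x
              simp only [Set.mem_diff, Set.mem_inter_iff, Set.mem_Iio]
              constructor
              · rintro ⟨hx1, hx2⟩
                exact ⟨⟨hIioord i hi hx1, fun hxX => hx2 ⟨hxX, hx1⟩⟩, hx1⟩
              · rintro ⟨⟨-, hx2⟩, hx3⟩
                exact ⟨hx3, fun hc => hx2 hc.1⟩
            rw [heq] at hmem
            exact hmem
        exact hE.2.2.2.2.1 _ h _ hsub (hSisub _)
  -- uniformity of V
  have hVuni : ∀ X ∈ V, cardEQ X lam := by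
    rintro X ⟨hX1, hX2⟩
    have hub : ∀ i < κ.ord, ∃ i', i' ∈ Si X ∧ i ≤ i' := by
      intro i hi
      by_contra hcon
      push_neg at hcon
      have hsub : Si X ⊆ Set.Iio i := fun i' hi' => hcon i' hi'
      have h1 : #(Si X) ≤ #(Set.Iio i) := Cardinal.mk_le_mk_of_subset hsub
      have h2 : #(Set.Iio i) < Cardinal.lift.{1,0} κ := mk_Iio_lt hi
      have h3 := hEuni _ hX2
      rw [cardEQ] at h3
      rw [h3] at h1
      exact absurd (h1.trans_lt h2) (lt_irrefl _)
    have hle : #X ≤ Cardinal.lift.{1,0} lam := by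
      have := Cardinal.mk_le_mk_of_subset hX1
      rwa [Ordinal.mk_Iio_ordinal, Cardinal.card_ord] at this
    have hlow : ∀ c, c < lam → Cardinal.lift.{1,0} c ≤ #X := by
      intro c hc
      obtain ⟨i, hiκ, hci⟩ := hcofinal c hc
      obtain ⟨i', hi'mem, hii'⟩ := hub i hiκ
      obtain ⟨hi'κ, hUi'⟩ := hi'mem
      have hc2 : c ≤ lam_ i' := by
        refine hci.trans ?_
        rcases eq_or_lt_of_le hii' with rfl | hlt'
        · exact le_rfl
        · exact (hmono i i' hlt' hi'κ).le
      have h4 := hUuni i' hi'κ _ hUi'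
      rw [cardEQ] at h4
      calc Cardinal.lift.{1,0} c ≤ Cardinal.lift.{1,0} (lam_ i') := Cardinal.lift_le.2 hc2
        _ = #(X ∩ Set.Iio (lam_ i').ord : Set Ordinal) := h4.symm
        _ ≤ #X := Cardinal.mk_le_mk_of_subset Set.inter_subset_left
    rcases lt_or_eq_of_le hle with hlt' | heq
    · exfalso
      obtain ⟨c', hc'lt, hc'eq⟩ := Cardinal.lt_lift_iff.1 hlt'
      have hsucc : Order.succ c' < lam := hsl.isSuccLimit.succ_lt hc'lt
      have := hlow _ hsucc
      rw [← hc'eq] at this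
      have := Cardinal.lift_le.1 this
      exact absurd this (Order.lt_succ c').not_ge
    · exact heq
  -- lam ≤ χlam
  have hlamchi : lam ≤ χlam := by
    by_contra hcon
    push_neg at hcon
    obtain ⟨i0, hi0κ, hi0⟩ := hcofinal χlam hcon
    set eχ := (Ordinal.ToType.mk : Set.Iio χlam.ord ≃o χlam.ord.ToType) with heχ
    set h : Ordinal → Ordinal := fun i =>
      if χlam < lam_ i then ⨆ x : χlam.ord.ToType, (f ((eχ.symm x : Set.Iio χlam.ord) : Ordinal) i + 1)
      else 0 with hhdef
    have hhlt : ∀ i < κ.ord, h i < (lam_ i).ord := by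
      intro i hi
      rw [hhdef]
      dsimp only
      split_ifs with hci
      · apply Cardinal.iSup_lt_ord_of_isRegular (hreg i hi)
        · rwa [Cardinal.mk_toType, Cardinal.card_ord]
        · intro x
          have hfx := hf ((eχ.symm x : Set.Iio χlam.ord) : Ordinal) (eχ.symm x).2 i hi
          have h5 := (Cardinal.isSuccLimit_ord (hreg i hi).aleph0_le).succ_lt hfx
          rwa [Ordinal.add_one_eq_succ]
      · exact (Cardinal.isSuccLimit_ord (hreg i hi).aleph0_le).pos
    obtain ⟨α, hα, hT⟩ := hfcof h hhlt
    have hTsub : {i | i < κ.ord ∧ h i < f α i} ⊆ Set.Iio (Order.succ i0) := by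
      rintro i ⟨hiκ, hif⟩
      rw [Set.mem_Iio, Order.lt_succ_iff]
      by_contra hcon2
      push_neg at hcon2
      have hlam_i : χlam < lam_ i := lt_of_le_of_lt hi0 (hmono i0 i hcon2 hiκ)
      have hge : f α i + 1 ≤ h i := by
        rw [hhdef]
        dsimp only
        rw [if_pos hlam_i]
        have h6 := Ordinal.le_iSup
          (fun x : χlam.ord.ToType => (f ((eχ.symm x : Set.Iio χlam.ord) : Ordinal) i + 1))
          (eχ ⟨α, hα⟩)
        simpa using h6
      have h7 : f α i < f α i + 1 := by
        rw [Ordinal.add_one_eq_succ]; exact Order.lt_succ _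
      exact absurd (h7.trans_le hge) (not_lt.2 hif.le)
    have h8 : #({i | i < κ.ord ∧ h i < f α i} : Set Ordinal) < Cardinal.lift.{1,0} κ :=
      lt_of_le_of_lt (Cardinal.mk_le_mk_of_subset hTsub) (mk_Iio_lt (κordlim.succ_lt hi0κ))
    have h9 := hEuni _ hT
    rw [cardEQ] at h9
    rw [h9] at h8
    exact absurd h8 (lt_irrefl _)
  -- pieces
  set piece : Ordinal → Ordinal → Ordinal → Set Ordinal :=
    fun α β i => A i (g β i) \ Set.Iio (f α i) with hpiecedef
  have hpiecemem : ∀ α < χlam.ord, ∀ β < χθ.ord, ∀ i < κ.ord, piece α β i ∈ U i := by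
    intro α hα β hβ i hi
    exact uf_diff_small (hU i hi) (hUuni i hi) (hAmem i hi _ (hg β hβ i hi))
      (mk_Iio_lt (hf α hα i hi))
  have hpiecesub : ∀ α β, β < χθ.ord → ∀ i < κ.ord, piece α β i ⊆ Set.Iio (lam_ i).ord := by
    intro α β hβ i hi x hx
    exact (hU i hi).1 _ (hAmem i hi _ (hg β hβ i hi)) hx.1
  set Bset : Ordinal → Ordinal → Set Ordinal → Set Ordinal :=
    fun α β Y => ⋃ i ∈ Y, piece α β i with hBsetdef
  have hBmemV : ∀ α < χlam.ord, ∀ β < χθ.ord, ∀ Y ∈ E, Bset α β Y ∈ V := by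
    intro α hα β hβ Y hY
    constructor
    · intro x hx
      obtain ⟨i, hiY, hxp⟩ := Set.mem_iUnion₂.1 hx
      have hiκ := hE.1 Y hY hiY
      exact hIioord i hiκ (hpiecesub α β hβ i hiκ hxp)
    · have hsub : Y ⊆ Si (Bset α β Y) := by
        intro i hiY
        have hiκ := hE.1 Y hY hiY
        refine ⟨hiκ, ?_⟩
        refine (hU i hiκ).2.2.2.2.1 _ (hpiecemem α hα β hβ i hiκ) _ ?_ Set.inter_subset_right
        intro x hx
        exact ⟨Set.mem_biUnion hiY hx, hpiecesub α β hβ i hiκ hx⟩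
      exact hE.2.2.2.2.1 _ hY _ hsub (hSisub _)
  set ℬ : Set (Set Ordinal.{0}) := Set.range
    (fun p : (Set.Iio χlam.ord) × (Set.Iio χθ.ord) × E => Bset p.1.1 p.2.1.1 p.2.2.1) with hBdef
  have hBsubV : ℬ ⊆ V := by
    rintro Z ⟨⟨α, β, Y⟩, rfl⟩
    exact hBmemV α.1 α.2 β.1 β.2 Y.1 Y.2
  -- cardinality of ℬ
  have hcardB : #ℬ ≤ Cardinal.lift.{1,0} (χlam * χθ) := by
    have hEcard : #E ≤ Cardinal.lift.{1,0} (2 ^ κ) := by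
      have hinj : Function.Injective
          (fun Y : E => (Subtype.val ⁻¹' (Y : Set Ordinal) : Set (Set.Iio κ.ord))) := by
        rintro ⟨Y1, hY1⟩ ⟨Y2, hY2⟩ hEq
        simp only [Subtype.mk.injEq]
        simp only at hEq
        ext x
        constructor
        · intro hx
          have hxκ : x ∈ Set.Iio κ.ord := hE.1 Y1 hY1 hx
          have hmem : (⟨x, hxκ⟩ : Set.Iio κ.ord) ∈ (Subtype.val ⁻¹' Y1 : Set (Set.Iio κ.ord)) := hx
          rw [hEq] at hmem
          exact hmem
        · intro hx
          have hxκ : x ∈ Set.Iio κ.ord := hE.1 Y2 hY2 hx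
          have hmem : (⟨x, hxκ⟩ : Set.Iio κ.ord) ∈ (Subtype.val ⁻¹' Y2 : Set (Set.Iio κ.ord)) := hx
          rw [← hEq] at hmem
          exact hmem
      calc #E ≤ #(Set (Set.Iio κ.ord)) := Cardinal.mk_le_of_injective hinj
        _ = 2 ^ #(Set.Iio κ.ord) := Cardinal.mk_set
        _ = 2 ^ (Cardinal.lift.{1,0} κ) := by rw [Ordinal.mk_Iio_ordinal, Cardinal.card_ord]
        _ = Cardinal.lift.{1,0} (2 ^ κ) := by
            rw [Cardinal.lift_power]
            norm_num
    have h1 : #ℬ ≤ #((Set.Iio χlam.ord) × (Set.Iio χθ.ord) × E) := Cardinal.mk_range_le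
    rw [Cardinal.mk_prod, Cardinal.mk_prod, Cardinal.lift_id, Cardinal.lift_id, Cardinal.lift_id,
      Cardinal.lift_id, Ordinal.mk_Iio_ordinal, Ordinal.mk_Iio_ordinal, Cardinal.card_ord,
      Cardinal.card_ord] at h1
    have h2 : Cardinal.lift.{1,0} χlam * (Cardinal.lift.{1,0} χθ * #E)
        ≤ Cardinal.lift.{1,0} χlam * (Cardinal.lift.{1,0} χθ * Cardinal.lift.{1,0} (2 ^ κ)) :=
      mul_le_mul_right (mul_le_mul_right hEcard _) _
    have h3 : χlam * (χθ * 2 ^ κ) ≤ χlam * χθ := by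
      have h2κ : (2 : Cardinal) ^ κ ≤ χlam := (hsl.two_power_lt hκlt).le.trans hlamchi
      have hθ1 : χθ ≠ 0 := hχθ.pos.ne'
      have haleph : ℵ₀ ≤ χlam * χθ := hχlam.aleph0_le.trans (Cardinal.le_mul_right hθ1)
      calc χlam * (χθ * 2 ^ κ) = (χlam * χθ) * 2 ^ κ := by ring
        _ ≤ (χlam * χθ) * (χlam * χθ) :=
          mul_le_mul_right (h2κ.trans (Cardinal.le_mul_right hθ1)) _
        _ = χlam * χθ := Cardinal.mul_eq_self haleph
    calc #ℬ ≤ Cardinal.lift.{1,0} χlam * (Cardinal.lift.{1,0} χθ * Cardinal.lift.{1,0} (2 ^ κ)) :=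
        h1.trans h2
      _ = Cardinal.lift.{1,0} (χlam * (χθ * 2 ^ κ)) := by
          rw [← Cardinal.lift_mul, ← Cardinal.lift_mul]
      _ ≤ Cardinal.lift.{1,0} (χlam * χθ) := Cardinal.lift_le.2 h3
  -- generation
  refine ⟨V, ℬ, hVuf, hVuni, hBsubV, hcardB, ?_⟩
  intro B hBV
  obtain ⟨hB1, hB2⟩ := hBV
  set CC : Ordinal → Set Ordinal := fun i =>
    if B ∩ Set.Iio (lam_ i).ord ∈ U i then B ∩ Set.Iio (lam_ i).ord else Set.Iio (lam_ i).ord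
    with hCCdef
  have hCCmem : ∀ i, i < κ.ord → CC i ∈ U i := by
    intro i hi
    rw [hCCdef]
    dsimp only
    split_ifs with hcase
    · exact hcase
    · exact (hU i hi).2.1
  have hex1 : ∀ i, i < κ.ord → ∃ a, a < (θ i).ord ∧ cardLT (A i a \ CC i) (lam_ i) := by
    intro i hi
    obtain ⟨a, ha1, ha2⟩ := hAgen i hi (CC i) (hCCmem i hi)
    exact ⟨a, ha1, ha2⟩
  set h1 : Ordinal → Ordinal := fun i =>
    if hi : i < κ.ord then Classical.choose (hex1 i hi) else 0 with hh1def
  have hh1θ : ∀ i < κ.ord, h1 i < (θ i).ord := by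
    intro i hi
    rw [hh1def]
    dsimp only
    rw [dif_pos hi]
    exact (Classical.choose_spec (hex1 i hi)).1
  have hh1card : ∀ i, i < κ.ord → cardLT (A i (h1 i) \ CC i) (lam_ i) := by
    intro i hi
    have : h1 i = Classical.choose (hex1 i hi) := by
      rw [hh1def]; dsimp only; rw [dif_pos hi]
    rw [this]
    exact (Classical.choose_spec (hex1 i hi)).2
  obtain ⟨β₀, hβ₀, hT1⟩ := hgcof h1 hh1θ
  have hDbound : ∀ i, i < κ.ord → (B ∩ Set.Iio (lam_ i).ord ∈ U i) → h1 i < g β₀ i →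
      ∃ η, η < (lam_ i).ord ∧ (A i (g β₀ i) \ B) ⊆ Set.Iio η := by
    intro i hi hUi hlt1
    have hgood : CC i = B ∩ Set.Iio (lam_ i).ord := by
      rw [hCCdef]; dsimp only; rw [if_pos hUi]
    have hsub : A i (g β₀ i) \ B ⊆ (A i (g β₀ i) \ A i (h1 i)) ∪ (A i (h1 i) \ CC i) := by
      intro x hx
      by_cases hxa : x ∈ A i (h1 i)
      · right
        refine ⟨hxa, ?_⟩
        rw [hgood]
        rintro ⟨hxB, -⟩
        exact hx.2 hxB
      · left; exact ⟨hx.1, hxa⟩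
    have hc1 := hAdec i hi (h1 i) (g β₀ i) hlt1 (hg β₀ hβ₀ i hi)
    have hc2 := hh1card i hi
    rw [cardLT] at hc1 hc2
    have hcard : #(A i (g β₀ i) \ B : Set Ordinal) < Cardinal.lift.{1,0} (lam_ i) := by
      refine lt_of_le_of_lt (Cardinal.mk_le_mk_of_subset hsub) ?_
      refine lt_of_le_of_lt (Cardinal.mk_union_le _ _) ?_
      refine Cardinal.add_lt_of_lt ?_ hc1 hc2
      simpa using Cardinal.lift_le.{1,0}.2 (hreg i hi).aleph0_le
    have hsub2 : A i (g β₀ i) \ B ⊆ Set.Iio (lam_ i).ord := fun x hx =>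
      (hU i hi).1 _ (hAmem i hi _ (hg β₀ hβ₀ i hi)) hx.1
    exact bounded_of_card_lt (hreg i hi) hsub2 hcard
  set h2 : Ordinal → Ordinal := fun i =>
    if hcond : i < κ.ord ∧ (B ∩ Set.Iio (lam_ i).ord ∈ U i) ∧ h1 i < g β₀ i then
      Classical.choose (hDbound i hcond.1 hcond.2.1 hcond.2.2)
    else 0 with hh2def
  have hh2lt : ∀ i < κ.ord, h2 i < (lam_ i).ord := by
    intro i hi
    rw [hh2def]
    dsimp only
    split_ifs with hcond
    · exact (Classical.choose_spec (hDbound i hcond.1 hcond.2.1 hcond.2.2)).1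
    · exact (Cardinal.isSuccLimit_ord (hreg i hi).aleph0_le).pos
  obtain ⟨α₀, hα₀, hT2⟩ := hfcof h2 hh2lt
  have hGE : Si B ∩ ({i | i < κ.ord ∧ h1 i < g β₀ i} ∩ {i | i < κ.ord ∧ h2 i < f α₀ i}) ∈ E :=
    hE.2.2.2.1 _ hB2 _ (hE.2.2.2.1 _ hT1 _ hT2)
  refine ⟨Bset α₀ β₀ _, ⟨⟨⟨α₀, hα₀⟩, ⟨β₀, hβ₀⟩, ⟨_, hGE⟩⟩, rfl⟩, ?_⟩
  have hempty : Bset α₀ β₀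
      (Si B ∩ ({i | i < κ.ord ∧ h1 i < g β₀ i} ∩ {i | i < κ.ord ∧ h2 i < f α₀ i})) \ B = ∅ := by
    ext x
    simp only [Set.mem_diff, Set.mem_empty_iff_false, iff_false, not_and]
    intro hxB hxnB
    obtain ⟨i, hiG, hxp⟩ := Set.mem_iUnion₂.1 hxB
    obtain ⟨⟨hiκ, hUi⟩, ⟨-, hT1i⟩, ⟨-, hT2i⟩⟩ := hiG
    have hcond : i < κ.ord ∧ (B ∩ Set.Iio (lam_ i).ord ∈ U i) ∧ h1 i < g β₀ i := ⟨hiκ, hUi, hT1i⟩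
    have hspec := (Classical.choose_spec (hDbound i hcond.1 hcond.2.1 hcond.2.2)).2
    have hxD : x ∈ A i (g β₀ i) \ B := ⟨hxp.1, hxnB⟩
    have hxlt : x < h2 i := by
      have h10 := hspec hxD
      have h11 : h2 i = Classical.choose (hDbound i hcond.1 hcond.2.1 hcond.2.2) := by
        rw [hh2def]; dsimp only; rw [dif_pos hcond]
      rw [h11]
      exact h10
    exact hxp.2 (hxlt.trans hT2i)
  rw [cardLT, hempty]
  rw [Cardinal.mk_emptyCollection]
  calc (0 : Cardinal.{1}) < ℵ₀ := Cardinal.aleph0_pos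
    _ ≤ Cardinal.lift.{1,0} lam := by
        simpa using Cardinal.lift_le.{1,0}.2 hsl.aleph0_le
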